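/- Let μ > 0, A, B, D₁, D_i > 0, ω > 0. Define F(τ) = (μ − ω√(B + D₁/τ²)) / √(A + D_i/τ²). Then F is strictly increasing in τ on (0, ∞) whenever μ − ω√(B + D₁/τ²) ≥ 0, and hence Q(F(τ)) is decreasing in τ. -/
import Mathlib


/-- The Gaussian tail function. -/
noncomputable def Qfun (x : ℝ) : ℝ :=
  (Real.sqrt (2 * Real.pi))⁻¹ * ∫ u in Set.Ioi x, Real.exp (-u ^ 2 / 2)

lemma gauss_integrable : MeasureTheory.Integrable (fun u : ℝ => Real.exp (-u ^ 2 / 2)) := by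
  have h := integrable_exp_neg_mul_sq (b := (1/2 : ℝ)) (by norm_num)
  convert h using 2 with u
  ring_nf

lemma Qfun_strictAnti : StrictAnti Qfun := by
  intro x y hxy
  unfold Qfun
  have hc : 0 < (Real.sqrt (2 * Real.pi))⁻¹ := by
    positivity
  have hint : ∀ s : Set ℝ, MeasureTheory.IntegrableOn (fun u : ℝ => Real.exp (-u ^ 2 / 2)) s :=
    fun s => gauss_integrable.integrableOn
  have hsplit : Set.Ioi x = Set.Ioc x y ∪ Set.Ioi y := (Set.Ioc_union_Ioi_eq_Ioi hxy.le).symm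
  have hdisj : Disjoint (Set.Ioc x y) (Set.Ioi y) := by
    simp [Set.disjoint_left]
  have hsum : (∫ u in Set.Ioi x, Real.exp (-u ^ 2 / 2)) =
      (∫ u in Set.Ioc x y, Real.exp (-u ^ 2 / 2)) + ∫ u in Set.Ioi y, Real.exp (-u ^ 2 / 2) := by
    rw [hsplit]
    exact MeasureTheory.setIntegral_union hdisj measurableSet_Ioi (hint _) (hint _)
  have hpos : 0 < ∫ u in Set.Ioc x y, Real.exp (-u ^ 2 / 2) := by
    rw [← intervalIntegral.integral_of_le hxy.le]
    apply intervalIntegral.intervalIntegral_pos_of_pos_on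
    · exact gauss_integrable.intervalIntegrable
    · intro u _; exact Real.exp_pos _
    · exact hxy
  have : (∫ u in Set.Ioi y, Real.exp (-u ^ 2 / 2)) < ∫ u in Set.Ioi x, Real.exp (-u ^ 2 / 2) := by
    rw [hsum]; linarith
  exact mul_lt_mul_of_pos_left this hc

/-- With `F(τ) = (μ − ω√(B + D₁/τ²)) / √(A + D_i/τ²)`, `F` is strictly increasing on
`(0, ∞)` wherever the numerator is nonnegative, and hence the miss rate `Q(F(τ))`
decreases with `τ`. -/
theorem miss_rate_decreases_with_time_step
    (μ A B D1 Di ω : ℝ) (hμ : 0 < μ) (hA : 0 < A) (hB : 0 < B)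
    (hD1 : 0 < D1) (hDi : 0 < Di) (hω : 0 < ω)
    (F : ℝ → ℝ)
    (hF : F = fun τ => (μ - ω * Real.sqrt (B + D1 / τ ^ 2)) / Real.sqrt (A + Di / τ ^ 2)) :
    ∀ τ1 τ2 : ℝ, 0 < τ1 → τ1 < τ2 →
      0 ≤ μ - ω * Real.sqrt (B + D1 / τ1 ^ 2) →
      F τ1 < F τ2 ∧ Qfun (F τ2) < Qfun (F τ1) := by
  intro τ1 τ2 h1 h12 hnum
  have h2 : 0 < τ2 := h1.trans h12
  have hsq : τ1 ^ 2 < τ2 ^ 2 := by nlinarith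
  have hB1 : 0 < B + D1 / τ1 ^ 2 := by positivity
  have hB2 : 0 < B + D1 / τ2 ^ 2 := by positivity
  have hA1 : 0 < A + Di / τ1 ^ 2 := by positivity
  have hA2 : 0 < A + Di / τ2 ^ 2 := by positivity
  have hdlt : D1 / τ2 ^ 2 < D1 / τ1 ^ 2 := by
    apply div_lt_div_of_pos_left hD1 (by positivity) hsq
  have hdlt' : Di / τ2 ^ 2 < Di / τ1 ^ 2 := by
    apply div_lt_div_of_pos_left hDi (by positivity) hsq
  have hsB : Real.sqrt (B + D1 / τ2 ^ 2) < Real.sqrt (B + D1 / τ1 ^ 2) :=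
    Real.sqrt_lt_sqrt hB2.le (by linarith)
  have hsA : Real.sqrt (A + Di / τ2 ^ 2) < Real.sqrt (A + Di / τ1 ^ 2) :=
    Real.sqrt_lt_sqrt hA2.le (by linarith)
  have hsA2 : 0 < Real.sqrt (A + Di / τ2 ^ 2) := Real.sqrt_pos.mpr hA2
  have hsA1 : 0 < Real.sqrt (A + Di / τ1 ^ 2) := Real.sqrt_pos.mpr hA1
  have hN : μ - ω * Real.sqrt (B + D1 / τ1 ^ 2) < μ - ω * Real.sqrt (B + D1 / τ2 ^ 2) := by
    nlinarith
  have hFlt : F τ1 < F τ2 := by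
    rw [hF]
    simp only
    calc (μ - ω * Real.sqrt (B + D1 / τ1 ^ 2)) / Real.sqrt (A + Di / τ1 ^ 2)
        ≤ (μ - ω * Real.sqrt (B + D1 / τ1 ^ 2)) / Real.sqrt (A + Di / τ2 ^ 2) := by
          apply div_le_div_of_nonneg_left hnum hsA2 hsA.le
      _ < (μ - ω * Real.sqrt (B + D1 / τ2 ^ 2)) / Real.sqrt (A + Di / τ2 ^ 2) := by
          exact (div_lt_div_iff_of_pos_right hsA2).mpr hN
  exact ⟨hFlt, Qfun_strictAnti hFlt⟩
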